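/- For all real numbers ε with 0 < ε < 1 and γ with 1 < γ < 2, and every natural number k ≥ 1, the finite sum ∑_{i=1}^{k−1} ε^(γ^i · (2−γ)) is strictly less than ε^(γ(2−γ)) · (1 − ε^((γ−1)(2−γ)))^(−1). -/

import Mathlib

theorem stmt_1 (ε γ : ℝ) (hε0 : 0 < ε) (hε1 : ε < 1)
    (hγ1 : 1 < γ) (hγ2 : γ < 2) (k : ℕ) (hk : 1 ≤ k) :
    ∑ i ∈ Finset.Icc 1 (k - 1), ε ^ (γ ^ (i : ℝ) * (2 - γ))
      < ε ^ (γ * (2 - γ)) * (1 - ε ^ ((γ - 1) * (2 - γ)))⁻¹ := by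
  set r : ℝ := ε ^ ((γ - 1) * (2 - γ)) with hr
  set C : ℝ := ε ^ (γ * (2 - γ)) with hC
  have hexp : 0 < (γ - 1) * (2 - γ) := mul_pos (by linarith) (by linarith)
  have hr0 : 0 < r := Real.rpow_pos_of_pos hε0 _
  have hr1 : r < 1 := Real.rpow_lt_one hε0.le hε1 hexp
  have hC0 : 0 < C := Real.rpow_pos_of_pos hε0 _
  have key : ∀ i ∈ Finset.Icc 1 (k - 1),
      ε ^ (γ ^ (i : ℝ) * (2 - γ)) ≤ C * r ^ (i - 1) := by
    intro i hi
    have hi1 : 1 ≤ i := (Finset.mem_Icc.mp hi).1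
    -- γ ^ i ≥ 1 + i (γ - 1)
    have hpow : (1 : ℝ) + (i : ℝ) * (γ - 1) ≤ γ ^ (i : ℕ) := by
      have := one_add_mul_le_pow (a := γ - 1) (by linarith) i
      simpa using this
    have hrpow : γ ^ ((i : ℕ) : ℝ) = γ ^ (i : ℕ) := Real.rpow_natCast γ i
    have hγ0 : (0:ℝ) < 2 - γ := by linarith
    have h1 : γ * (2 - γ) + ((i : ℝ) - 1) * ((γ - 1) * (2 - γ)) ≤ γ ^ (i : ℝ) * (2 - γ) := by
      rw [hrpow]
      nlinarith [hpow]
    have h2 : ε ^ (γ ^ (i : ℝ) * (2 - γ))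
        ≤ ε ^ (γ * (2 - γ) + ((i : ℝ) - 1) * ((γ - 1) * (2 - γ))) :=
      Real.rpow_le_rpow_of_exponent_ge hε0 hε1.le h1
    calc ε ^ (γ ^ (i : ℝ) * (2 - γ))
        ≤ ε ^ (γ * (2 - γ) + ((i : ℝ) - 1) * ((γ - 1) * (2 - γ))) := h2
      _ = C * r ^ (i - 1) := by
          rw [Real.rpow_add hε0, hC, hr, ← Real.rpow_natCast (ε ^ ((γ - 1) * (2 - γ))) (i - 1),
            ← Real.rpow_mul hε0.le]
          congr 2
          push_cast [Nat.cast_sub hi1]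
          ring
  have hsum : ∑ i ∈ Finset.Icc 1 (k - 1), ε ^ (γ ^ (i : ℝ) * (2 - γ))
      ≤ ∑ i ∈ Finset.Icc 1 (k - 1), C * r ^ (i - 1) := Finset.sum_le_sum key
  have hre : ∑ i ∈ Finset.Icc 1 (k - 1), C * r ^ (i - 1)
      = C * ∑ j ∈ Finset.range (k - 1), r ^ j := by
    have : Finset.Icc 1 (k - 1) = Finset.Ico 1 k := by
      ext x; simp [Finset.mem_Icc, Finset.mem_Ico]; omega
    rw [Finset.mul_sum, this, Finset.sum_Ico_eq_sum_range]
    apply Finset.sum_congr rfl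
    intro j hj
    simp
  have hgeom : ∑ j ∈ Finset.range (k - 1), r ^ j < (1 - r)⁻¹ := by
    rw [geom_sum_eq (by linarith : r ≠ 1)]
    rw [div_lt_iff_of_neg (by linarith : r - 1 < 0)]
    have : 0 < r ^ (k - 1) := pow_pos hr0 _
    have h1r : 0 < 1 - r := by linarith
    rw [inv_mul_eq_div, div_lt_iff₀ h1r] at *
    nlinarith
  calc ∑ i ∈ Finset.Icc 1 (k - 1), ε ^ (γ ^ (i : ℝ) * (2 - γ))
      ≤ C * ∑ j ∈ Finset.range (k - 1), r ^ j := hre ▸ hsum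
    _ < C * (1 - r)⁻¹ := by exact mul_lt_mul_of_pos_left hgeom hC0
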